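/- Let d ≥ 2 be an integer, k ∈ ℝ, and let f, χ be twice continuously differentiable real functions on an open interval I ⊆ (0, ∞) with f(z) > 0 for all z ∈ I. Define F(z) = (1/2) z^{1−d} e^{χ(z)/2} · (f e^{−χ})'(z), and define 𝓘(z) = (z^{1−d}/(d−1)) · [ (d−1) z^{d−1} · (z^{2−d} √(f(z)) · (√(f(z)) e^{−χ(z)/2}/z)')' + ((d−1)/2) (z f'(z) + (d−2) k z² − d f(z)) z^{−2} e^{−χ(z)/2} − ((d−1)/(2z²)) (d f(z) − z f'(z) − (d−2) k z² + f(z) z χ'(z)) e^{−χ(z)/2} − (e^{−χ(z)/2}/z²) (d−1)(d−2) k z² ]. Then F'(z) = 𝓘(z) for every z ∈ I. -/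

import Mathlib

/-- the purely geometric identity `F' = 𝓘` (Eq. (25) of the paper)
for the static metric ansatz `ds² = z⁻²[−f e^(−χ) dt² + f⁻¹ dz² + dΣ²_{k,d−1}]`,
valid for arbitrary `f > 0` and `χ` on an open interval `I ⊆ (0, ∞)`. -/
theorem geometric_identity_F_deriv_eq_I
    (d : ℕ) (hd : 2 ≤ d) (k : ℝ)
    (a b : ℝ) (ha : 0 ≤ a)
    (f χ : ℝ → ℝ)
    (hf : ContDiffOn ℝ 2 f (Set.Ioo a b))
    (hχ : ContDiffOn ℝ 2 χ (Set.Ioo a b))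
    (hfpos : ∀ z ∈ Set.Ioo a b, 0 < f z)
    (F 𝓘 : ℝ → ℝ)
    (hF : ∀ z, F z = (1 / 2) * z ^ (1 - (d : ℤ)) * Real.exp (χ z / 2) *
        deriv (fun s => f s * Real.exp (-(χ s))) z)
    (h𝓘 : ∀ z, 𝓘 z = (z ^ (1 - (d : ℤ)) / ((d : ℝ) - 1)) *
        (((d : ℝ) - 1) * z ^ ((d : ℤ) - 1) *
            deriv (fun s => s ^ ((2 : ℤ) - (d : ℤ)) * Real.sqrt (f s) *
              deriv (fun t => Real.sqrt (f t) * Real.exp (-(χ t) / 2) / t) s) z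
          + (((d : ℝ) - 1) / 2) *
              (z * deriv f z + ((d : ℝ) - 2) * k * z ^ 2 - (d : ℝ) * f z) *
              z ^ (-2 : ℤ) * Real.exp (-(χ z) / 2)
          - (((d : ℝ) - 1) / (2 * z ^ 2)) *
              ((d : ℝ) * f z - z * deriv f z - ((d : ℝ) - 2) * k * z ^ 2
                + f z * z * deriv χ z) * Real.exp (-(χ z) / 2)
          - (Real.exp (-(χ z) / 2) / z ^ 2) *
              (((d : ℝ) - 1) * ((d : ℝ) - 2) * k * z ^ 2))) :
    ∀ z ∈ Set.Ioo a b, deriv F z = 𝓘 z := by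
  -- first-order derivative facts
  have hf1 : ∀ s ∈ Set.Ioo a b, HasDerivAt f (deriv f s) s := fun s hs =>
    ((hf.differentiableOn two_ne_zero).differentiableAt (isOpen_Ioo.mem_nhds hs)).hasDerivAt
  have hχ1 : ∀ s ∈ Set.Ioo a b, HasDerivAt χ (deriv χ s) s := fun s hs =>
    ((hχ.differentiableOn two_ne_zero).differentiableAt (isOpen_Ioo.mem_nhds hs)).hasDerivAt
  have hf2 : ∀ s ∈ Set.Ioo a b, HasDerivAt (deriv f) (deriv (deriv f) s) s := fun s hs =>
    ((((hf.deriv_of_isOpen isOpen_Ioo (by norm_num)).differentiableOn one_ne_zero)).differentiableAt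
      (isOpen_Ioo.mem_nhds hs)).hasDerivAt
  have hχ2 : ∀ s ∈ Set.Ioo a b, HasDerivAt (deriv χ) (deriv (deriv χ) s) s := fun s hs =>
    ((((hχ.deriv_of_isOpen isOpen_Ioo (by norm_num)).differentiableOn one_ne_zero)).differentiableAt
      (isOpen_Ioo.mem_nhds hs)).hasDerivAt
  -- exp factors
  have hexp : ∀ s ∈ Set.Ioo a b, HasDerivAt (fun t => Real.exp (-(χ t) / 2))
      (Real.exp (-(χ s) / 2) * (-(deriv χ s) / 2)) s := fun s hs =>
    (((hχ1 s hs).neg.div_const 2)).exp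
  -- derivative of f * exp(-χ)
  have key1 : ∀ s ∈ Set.Ioo a b, HasDerivAt (fun t => f t * Real.exp (-(χ t)))
      (deriv f s * Real.exp (-(χ s)) + f s * (Real.exp (-(χ s)) * (-(deriv χ s)))) s :=
    fun s hs => (hf1 s hs).mul ((hχ1 s hs).neg.exp)
  -- derivative of the inner function  √f e^{-χ/2} / t
  have key2 : ∀ s ∈ Set.Ioo a b, HasDerivAt (fun t => Real.sqrt (f t) * Real.exp (-(χ t) / 2) / t)
      (((deriv f s / (2 * Real.sqrt (f s)) * Real.exp (-(χ s) / 2)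
          + Real.sqrt (f s) * (Real.exp (-(χ s) / 2) * (-(deriv χ s) / 2))) * s
        - Real.sqrt (f s) * Real.exp (-(χ s) / 2) * 1) / s ^ 2) s := by
    intro s hs
    have hs0 : (0:ℝ) < s := lt_of_le_of_lt ha hs.1
    exact (((hf1 s hs).sqrt (hfpos s hs).ne').mul (hexp s hs)).div (hasDerivAt_id s) hs0.ne'
  intro z hz
  have hmem : Set.Ioo a b ∈ nhds z := isOpen_Ioo.mem_nhds hz
  have hz0 : (0:ℝ) < z := lt_of_le_of_lt ha hz.1
  have hfz : 0 < f z := hfpos z hz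
  -- nice closed forms
  set Fc : ℝ → ℝ := fun s => (1/2) *
      (s ^ (1 - (d:ℤ)) * ((deriv f s - f s * deriv χ s) * Real.exp (-(χ s) / 2))) with hFc_def
  set Gc : ℝ → ℝ := fun s => Real.exp (-(χ s) / 2) *
      (s ^ (1 - (d:ℤ)) * (deriv f s - f s * deriv χ s) / 2 - f s * s ^ (-(d:ℤ))) with hGc_def
  -- F agrees with Fc on the interval
  have hFeq : F =ᶠ[nhds z] Fc := by
    filter_upwards [hmem] with s hs
    rw [hF s, (key1 s hs).deriv, hFc_def]
    have he : Real.exp (χ s / 2) * Real.exp (-(χ s)) = Real.exp (-(χ s) / 2) := by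
      rw [← Real.exp_add]; ring_nf
    calc (1/2) * s ^ (1 - (d:ℤ)) * Real.exp (χ s / 2) *
          (deriv f s * Real.exp (-(χ s)) + f s * (Real.exp (-(χ s)) * (-(deriv χ s))))
        = (1/2) * (s ^ (1 - (d:ℤ)) * ((deriv f s - f s * deriv χ s) *
            (Real.exp (χ s / 2) * Real.exp (-(χ s))))) := by ring
      _ = _ := by rw [he]
  -- the inner-deriv function agrees with Gc
  have hGeq : (fun s => s ^ ((2:ℤ) - (d:ℤ)) * Real.sqrt (f s) *
      deriv (fun t => Real.sqrt (f t) * Real.exp (-(χ t) / 2) / t) s) =ᶠ[nhds z] Gc := by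
    filter_upwards [hmem] with s hs
    rw [(key2 s hs).deriv]
    simp only [hGc_def]
    have hs0 : (0:ℝ) < s := lt_of_le_of_lt ha hs.1
    have hfs : 0 < f s := hfpos s hs
    set q := Real.sqrt (f s) with hqdef
    have hq0 : q ≠ 0 := by positivity
    have hqq : q * q = f s := Real.mul_self_sqrt hfs.le
    rw [← hqq]
    have e1 : s ^ ((2:ℤ) - (d:ℤ)) = s ^ (1 - (d:ℤ)) * s := by
      rw [show (2:ℤ) - (d:ℤ) = (1 - (d:ℤ)) + 1 by ring, zpow_add₀ hs0.ne', zpow_one]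
    have e2 : s ^ (1 - (d:ℤ)) = s ^ (-(d:ℤ)) * s := by
      rw [show (1:ℤ) - (d:ℤ) = (-(d:ℤ)) + 1 by ring, zpow_add₀ hs0.ne', zpow_one]
    rw [e1, e2]
    field_simp
    ring
  -- derivative of Fc at z
  have hA := hasDerivAt_zpow (1 - (d:ℤ)) z (Or.inl hz0.ne')
  have hA2 := hasDerivAt_zpow (-(d:ℤ)) z (Or.inl hz0.ne')
  have hB : HasDerivAt (fun s => deriv f s - f s * deriv χ s)
      (deriv (deriv f) z - (deriv f z * deriv χ z + f z * deriv (deriv χ) z)) z :=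
    (hf2 z hz).sub ((hf1 z hz).mul (hχ2 z hz))
  have hFc' := (hA.mul (hB.mul (hexp z hz))).const_mul (1/2)
  have hGc' := (hexp z hz).mul (((hA.mul hB).div_const 2).sub ((hf1 z hz).mul hA2))
  -- assemble
  have eF : deriv F z = _ := hFeq.deriv_eq.trans hFc'.deriv
  have eG := hGeq.deriv_eq.trans hGc'.deriv
  rw [eF, h𝓘 z, eG]
  have hd1 : ((d:ℝ) - 1) ≠ 0 := by
    have : (2:ℝ) ≤ (d:ℝ) := by exact_mod_cast hd
    linarith
  have hzd : z ^ (d:ℤ) ≠ 0 := zpow_ne_zero _ hz0.ne'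
  have p1 : z ^ (1 - (d:ℤ)) = z / z ^ (d:ℤ) := by rw [zpow_sub₀ hz0.ne', zpow_one]
  have p2 : z ^ (1 - (d:ℤ) - 1) = (z ^ (d:ℤ))⁻¹ := by
    rw [show (1:ℤ) - (d:ℤ) - 1 = -(d:ℤ) by ring, zpow_neg]
  have p3 : z ^ (-(d:ℤ)) = (z ^ (d:ℤ))⁻¹ := zpow_neg z _
  have p4 : z ^ (-(d:ℤ) - 1) = (z ^ (d:ℤ))⁻¹ * z⁻¹ := by
    rw [show -(d:ℤ) - 1 = -((d:ℤ) + 1) by ring, zpow_neg, zpow_add₀ hz0.ne', zpow_one,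
      mul_inv]
  have p5 : z ^ ((d:ℤ) - 1) = z ^ (d:ℤ) / z := by rw [zpow_sub₀ hz0.ne', zpow_one]
  have p6 : z ^ (-2:ℤ) = (z^2)⁻¹ := by
    rw [zpow_neg, zpow_two, pow_two]
  simp only [Pi.mul_apply, Pi.sub_apply]
  push_cast
  rw [p1, p2, p3, p4, p5, p6]
  field_simp
  ring
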